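/- Let H be a complex Hilbert space, k ∈ ℕ and l ∈ ℕ. Let V^{⊗k}_l denote the set of unit vectors of H^{⊗k} with Schmidt rank ≤ l, and V^{∧k}_l the set of unit vectors of H^{∧k} with Slater rank ≤ l; let K^{⊗k}_l and K^{∧k}_l be the norm-closed convex hulls of {ω_{ξ,η} : ξ, η ∈ V^{⊗k}_l} and {ω_{ξ,η} : ξ, η ∈ V^{∧k}_l} respectively. Then: (i) every normal state φ on B(H^{⊗k}) satisfies q_{K^{⊗k}_l}(φ) ≥ 1, with equality if and only if the Schmidt number of φ is ≤ l; (ii) every normal state φ₋ on B(H^{∧k}) satisfies q_{K^{∧k}_l}(φ₋) ≥ 1, with equality if and only if the Slater number of φ₋ is ≤ l. -/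

import Mathlib

noncomputable section

open scoped InnerProductSpace ENNReal Pointwise

/-- The vector functional `ω_{ξ,η}` on `B(H)` given by `x ↦ ⟨xξ, η⟩`
(linear in `x`; in Mathlib's convention this is `⟪η, x ξ⟫_ℂ`). -/
def omegaFunctional {H : Type*} [NormedAddCommGroup H] [InnerProductSpace ℂ H]
    (ξ η : H) : (H →L[ℂ] H) →L[ℂ] ℂ :=
  (innerSL ℂ η).comp (ContinuousLinearMap.apply ℂ H ξ)

/-- A continuous linear functional on `B(H)` is *normal* if it lies in the norm closure of the
linear span of the vector functionals (this is the predual `B(H)_*`, i.e. the trace-class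
induced functionals). -/
def IsNormalFunctional {H : Type*} [NormedAddCommGroup H] [InnerProductSpace ℂ H]
    (ψ : (H →L[ℂ] H) →L[ℂ] ℂ) : Prop :=
  ψ ∈ closure (Submodule.span ℂ {φ : (H →L[ℂ] H) →L[ℂ] ℂ | ∃ ξ η : H, φ = omegaFunctional ξ η} :
    Set ((H →L[ℂ] H) →L[ℂ] ℂ))

/-- A *normal state* on `B(H)`: a positive normal functional of norm one. -/
def IsNormalState {H : Type*} [NormedAddCommGroup H] [InnerProductSpace ℂ H] [CompleteSpace H]
    (φ : (H →L[ℂ] H) →L[ℂ] ℂ) : Prop :=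
  IsNormalFunctional φ ∧ ‖φ‖ = 1 ∧
    ∀ x : H →L[ℂ] H, x.IsPositive → 0 ≤ (φ x).re ∧ (φ x).im = 0

/-- `‖x‖_K := sup {|ψ(x)| : ψ ∈ K}`. -/
def normK {H : Type*} [NormedAddCommGroup H] [InnerProductSpace ℂ H]
    (K : Set ((H →L[ℂ] H) →L[ℂ] ℂ)) (x : H →L[ℂ] H) : ℝ :=
  sSup ((fun ψ : (H →L[ℂ] H) →L[ℂ] ℂ => ‖ψ x‖) '' K)

/-- The Minkowski functional `q_K(ψ) := inf {α ≥ 0 : ψ ∈ αK}`, with value `∞` if no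
such `α` exists. -/
def qK {H : Type*} [NormedAddCommGroup H] [InnerProductSpace ℂ H]
    (K : Set ((H →L[ℂ] H) →L[ℂ] ℂ)) (ψ : (H →L[ℂ] H) →L[ℂ] ℂ) : ℝ≥0∞ :=
  sInf {c : ℝ≥0∞ | ∃ r : ℝ, 0 ≤ r ∧ c = ENNReal.ofReal r ∧ ψ ∈ r • K}


/-- An abstract presentation of the `k`-fold Hilbert space tensor power `H^{⊗k}` of `H`,
realized on a Hilbert space `T`: a continuous multilinear map `tprod` (the elementary tensors
`η₁ ⊗ ... ⊗ η_k`) whose inner products multiply, whose range has dense linear span, together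
with the permutation unitaries `U_π` permuting the tensor factors. -/
structure HilbertTensorPower (k : ℕ) (H T : Type*) [NormedAddCommGroup H]
    [InnerProductSpace ℂ H] [NormedAddCommGroup T] [InnerProductSpace ℂ T] where
  tprod : ContinuousMultilinearMap ℂ (fun _ : Fin k => H) T
  inner_tprod : ∀ ξ η : Fin k → H, ⟪tprod ξ, tprod η⟫_ℂ = ∏ i, ⟪ξ i, η i⟫_ℂ
  span_dense : (Submodule.span ℂ (Set.range ⇑tprod)).topologicalClosure = ⊤
  U : Equiv.Perm (Fin k) → (T →L[ℂ] T)
  U_isometry : ∀ π, Isometry ⇑(U π)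
  U_surjective : ∀ π, Function.Surjective ⇑(U π)
  U_tprod : ∀ (π : Equiv.Perm (Fin k)) (ξ : Fin k → H),
    U π (tprod ξ) = tprod fun i => ξ (π i)

namespace HilbertTensorPower

variable {k : ℕ} {H T : Type*} [NormedAddCommGroup H] [InnerProductSpace ℂ H]
  [NormedAddCommGroup T] [InnerProductSpace ℂ T]

/-- The symmetrization projection `P₊ = (1/k!) Σ_π U_π`. -/
def Pplus (P : HilbertTensorPower k H T) : T →L[ℂ] T :=
  ((k.factorial : ℂ))⁻¹ • ∑ π : Equiv.Perm (Fin k), P.U π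

/-- The antisymmetrization projection `P₋ = (1/k!) Σ_π sign(π) U_π`. -/
def Pminus (P : HilbertTensorPower k H T) : T →L[ℂ] T :=
  ((k.factorial : ℂ))⁻¹ •
    ∑ π : Equiv.Perm (Fin k), (((Equiv.Perm.sign π : ℤ) : ℂ)) • P.U π

/-- The wedge product `η₁ ∧ ... ∧ η_k := √(k!) · P₋(η₁ ⊗ ... ⊗ η_k)`. -/
def wedge (P : HilbertTensorPower k H T) (η : Fin k → H) : T :=
  (Real.sqrt k.factorial : ℂ) • P.Pminus (P.tprod η)

/-- The set `V^{⊗k}` of unit product vectors. -/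
def prodVecs (P : HilbertTensorPower k H T) : Set T :=
  {ζ : T | ∃ η : Fin k → H, (∀ i, ‖η i‖ = 1) ∧ ζ = P.tprod η}

/-- The set `V^{∨k}` of symmetric unit product vectors `η ⊗ ... ⊗ η`. -/
def symVecs (P : HilbertTensorPower k H T) : Set T :=
  {ζ : T | ∃ η : H, ‖η‖ = 1 ∧ ζ = P.tprod fun _ => η}

/-- The set `V^{∧k}` of unit wedge (Slater) vectors. -/
def wedgeVecs (P : HilbertTensorPower k H T) : Set T :=
  {ζ : T | ∃ η : Fin k → H, ζ = P.wedge η ∧ ‖ζ‖ = 1}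

end HilbertTensorPower


section Aux

open ContinuousLinearMap

variable {E : Type*} [NormedAddCommGroup E] [InnerProductSpace ℂ E]

lemma norm_smul_fnR (r : ℝ) (f : (E →L[ℂ] E) →L[ℂ] ℂ) : ‖r • f‖ = |r| * ‖f‖ := by
  haveI : NormSMulClass ℝ ((E →L[ℂ] E) →L[ℂ] ℂ) :=
    @NormedSpace.toNormSMulClass _ _ _ _ ContinuousLinearMap.toNormedSpace
  exact (norm_smul r f).trans (by rw [Real.norm_eq_abs])

lemma norm_smul_op (c : ℂ) (x : E →L[ℂ] E) : ‖c • x‖ = ‖c‖ * ‖x‖ := by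
  haveI : NormSMulClass ℂ (E →L[ℂ] E) :=
    @NormedSpace.toNormSMulClass _ _ _ _ ContinuousLinearMap.toNormedSpace
  exact norm_smul c x

lemma omegaFunctional_apply (ξ η : E) (x : E →L[ℂ] E) :
    omegaFunctional ξ η x = ⟪η, x ξ⟫_ℂ := rfl

lemma norm_omegaFunctional_le (ξ η : E) : ‖omegaFunctional ξ η‖ ≤ ‖η‖ * ‖ξ‖ := by
  refine ContinuousLinearMap.opNorm_le_bound _ (by positivity) fun x => ?_
  calc ‖omegaFunctional ξ η x‖ = ‖⟪η, x ξ⟫_ℂ‖ := rfl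
    _ ≤ ‖η‖ * ‖x ξ‖ := norm_inner_le_norm _ _
    _ ≤ ‖η‖ * (‖x‖ * ‖ξ‖) := by
        gcongr
        exact x.le_opNorm ξ
    _ = ‖η‖ * ‖ξ‖ * ‖x‖ := by ring

lemma omegaFunctional_sub (ξ η : E) :
    omegaFunctional ξ η - omegaFunctional ξ ξ = omegaFunctional ξ (η - ξ) := by
  ext x
  simp [omegaFunctional_apply, inner_sub_left]

variable [CompleteSpace E]

lemma isPositive_smul_one_add {b : E →L[ℂ] E} (hb : IsSelfAdjoint b) {r : ℝ}
    (hr : ‖b‖ ≤ r) : (((r : ℂ) • (1 : E →L[ℂ] E)) + b).IsPositive := by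
  rw [ContinuousLinearMap.isPositive_def']; constructor
  · have h1 : IsSelfAdjoint ((r : ℂ) • (1 : E →L[ℂ] E)) := by
      show star _ = _
      simp [star_smul, Complex.conj_ofReal]
    exact h1.add hb
  · intro v
    have h1 : ‖⟪b v, v⟫_ℂ‖ ≤ ‖b v‖ * ‖v‖ := norm_inner_le_norm _ _
    have h2 : ‖b v‖ ≤ ‖b‖ * ‖v‖ := b.le_opNorm v
    have hv : ‖⟪b v, v⟫_ℂ‖ ≤ r * ‖v‖ ^ 2 := by
      nlinarith [norm_nonneg v, norm_nonneg (b v), norm_nonneg b]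
    have h3 : |(⟪b v, v⟫_ℂ).re| ≤ ‖⟪b v, v⟫_ℂ‖ := by
      exact Complex.abs_re_le_norm _
    have hre : -(r * ‖v‖ ^ 2) ≤ (⟪b v, v⟫_ℂ).re := by
      have h4 := (abs_le.mp (h3.trans hv)).1
      linarith
    have hTv : ⟪(((r : ℂ) • (1 : E →L[ℂ] E)) + b) v, v⟫_ℂ
        = (r : ℂ) * ⟪v, v⟫_ℂ + ⟪b v, v⟫_ℂ := by
      rw [ContinuousLinearMap.add_apply, ContinuousLinearMap.smul_apply,
        ContinuousLinearMap.one_apply, inner_add_left, inner_smul_left,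
        Complex.conj_ofReal]
    rw [ContinuousLinearMap.reApplyInnerSelf, hTv]
    simp only [RCLike.re_to_complex, Complex.add_re, Complex.mul_re,
      Complex.ofReal_re, Complex.ofReal_im, zero_mul, sub_zero]
    have hvv : (⟪v, v⟫_ℂ).re = ‖v‖ ^ 2 := by
      have hv2 := @inner_self_eq_norm_sq ℂ _ _ _ _ v
      simpa using hv2
    rw [hvv]
    linarith

variable {φ : (E →L[ℂ] E) →L[ℂ] ℂ}
  (hpos : ∀ x : E →L[ℂ] E, x.IsPositive → 0 ≤ (φ x).re ∧ (φ x).im = 0)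

include hpos

lemma phi_im_selfAdjoint {b : E →L[ℂ] E} (hb : IsSelfAdjoint b) : (φ b).im = 0 := by
  have h1 := hpos _ (isPositive_smul_one_add hb le_rfl)
  have h2 := hpos _ (isPositive_smul_one_add (IsSelfAdjoint.zero _)
    (r := ‖b‖) (by rw [norm_zero]; exact norm_nonneg b))
  have heq : φ b = φ (((‖b‖ : ℂ) • (1 : E →L[ℂ] E)) + b)
      - φ (((‖b‖ : ℂ) • (1 : E →L[ℂ] E)) + 0) := by
    rw [map_add, map_add, map_zero]
    ring
  rw [heq, Complex.sub_im, h1.2, h2.2, sub_zero]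

lemma phi_star (a : E →L[ℂ] E) : φ (star a) = starRingEnd ℂ (φ a) := by
  set b : E →L[ℂ] E := a + star a with hbdef
  set c : E →L[ℂ] E := Complex.I • (a - star a) with hcdef
  have hb : IsSelfAdjoint b := by
    show star _ = _
    rw [hbdef, star_add, star_star, add_comm]
  have hc : IsSelfAdjoint c := by
    show star _ = _
    rw [hcdef, star_smul, star_sub, star_star]
    ext v
    simp only [Complex.star_def, Complex.conj_I, ContinuousLinearMap.neg_apply,
      ContinuousLinearMap.sub_apply, ContinuousLinearMap.smul_apply, neg_smul, smul_sub]
    module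
  have hib := phi_im_selfAdjoint hpos hb
  have hic := phi_im_selfAdjoint hpos hc
  have hconjb : starRingEnd ℂ (φ b) = φ b := Complex.conj_eq_iff_im.mpr hib
  have hconjc : starRingEnd ℂ (φ c) = φ c := Complex.conj_eq_iff_im.mpr hic
  have ha : a = (2 : ℂ)⁻¹ • (b - Complex.I • c) := by
    rw [hbdef, hcdef]
    ext v
    simp only [ContinuousLinearMap.smul_apply, ContinuousLinearMap.sub_apply,
      ContinuousLinearMap.add_apply, smul_smul, Complex.I_mul_I]
    module
  have ha' : star a = (2 : ℂ)⁻¹ • (b + Complex.I • c) := by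
    rw [hbdef, hcdef]
    ext v
    simp only [ContinuousLinearMap.smul_apply, ContinuousLinearMap.sub_apply,
      ContinuousLinearMap.add_apply, smul_smul, Complex.I_mul_I]
    module
  have e0 : φ (Complex.I • c) = Complex.I * φ c := φ.map_smul _ _
  have e1 : φ (star a) = (2:ℂ)⁻¹ * (φ b + Complex.I * φ c) := by
    calc φ (star a) = φ ((2:ℂ)⁻¹ • (b + Complex.I • c)) := congrArg φ ha'
      _ = (2:ℂ)⁻¹ • φ (b + Complex.I • c) := φ.map_smul _ _
      _ = (2:ℂ)⁻¹ • (φ b + φ (Complex.I • c)) := by rw [map_add]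
      _ = (2:ℂ)⁻¹ • (φ b + Complex.I * φ c) := by rw [e0]
      _ = (2:ℂ)⁻¹ * (φ b + Complex.I * φ c) := rfl
  have e2 : φ a = (2:ℂ)⁻¹ * (φ b - Complex.I * φ c) := by
    calc φ a = φ ((2:ℂ)⁻¹ • (b - Complex.I • c)) := congrArg φ ha
      _ = (2:ℂ)⁻¹ • φ (b - Complex.I • c) := φ.map_smul _ _
      _ = (2:ℂ)⁻¹ • (φ b - φ (Complex.I • c)) := by rw [map_sub]
      _ = (2:ℂ)⁻¹ • (φ b - Complex.I * φ c) := by rw [e0]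
      _ = (2:ℂ)⁻¹ * (φ b - Complex.I * φ c) := rfl
  rw [e1, e2, map_mul, map_inv₀, map_sub, map_mul, Complex.conj_I, hconjb, hconjc]
  have h2 : (starRingEnd ℂ) (2 : ℂ) = 2 := map_ofNat _ 2
  rw [h2]
  ring

lemma phi_apply_one (hn : ‖φ‖ = 1) : φ 1 = 1 := by
  have h1pos := hpos 1 ContinuousLinearMap.isPositive_one
  set r : ℝ := (φ 1).re with hrdef
  have claim : ∀ x : E →L[ℂ] E, ‖x‖ ≤ 1 → ‖φ x‖ ≤ r := by
    intro x hx
    by_cases h0 : φ x = 0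
    · simpa [h0] using h1pos.1
    set c : ℂ := starRingEnd ℂ (φ x) / (‖φ x‖ : ℂ) with hcdef
    have hnx : (0:ℝ) < ‖φ x‖ := norm_pos_iff.mpr h0
    have hc : ‖c‖ = 1 := by
      rw [hcdef, norm_div, RCLike.norm_conj]
      simp only [Complex.norm_real, Real.norm_eq_abs, abs_norm]
      exact div_self hnx.ne'
    set y : E →L[ℂ] E := c • x with hydef
    have hy : ‖y‖ ≤ 1 := by
      rw [hydef, norm_smul_op, hc, one_mul]
      exact hx
    have hφy : φ y = (‖φ x‖ : ℂ) := by
      have hstep : φ y = c * φ x := by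
        calc φ y = φ (c • x) := congrArg φ hydef
          _ = c • φ x := φ.map_smul _ _
          _ = c * φ x := rfl
      have hz : ((‖φ x‖ : ℝ) : ℂ) ≠ 0 := by exact_mod_cast hnx.ne'
      rw [hstep, hcdef, div_mul_eq_mul_div, RCLike.conj_mul]
      norm_cast
      rw [sq]
      field_simp
      exact Complex.ofReal_pow _ _
    set bop : E →L[ℂ] E := (2 : ℂ)⁻¹ • (y + star y) with hbdef
    have hbsa : IsSelfAdjoint bop := by
      show star _ = _
      rw [hbdef, star_smul, star_add, star_star]
      have h2' : star ((2:ℂ)⁻¹) = (2:ℂ)⁻¹ := by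
        rw [star_inv₀, star_ofNat]
      rw [h2', add_comm]
    have hbn : ‖bop‖ ≤ 1 := by
      calc ‖bop‖ = ‖(2:ℂ)⁻¹‖ * ‖y + star y‖ := by rw [hbdef, norm_smul_op]
        _ ≤ ‖(2:ℂ)⁻¹‖ * (‖y‖ + ‖star y‖) := by gcongr; exact norm_add_le _ _
        _ = 2⁻¹ * (‖y‖ + ‖y‖) := by rw [norm_star]; norm_num
        _ = ‖y‖ := by ring
        _ ≤ 1 := hy
    have hp1' : ((1 : E →L[ℂ] E) - bop).IsPositive := by
      have h := isPositive_smul_one_add hbsa.neg (r := 1) (by rwa [norm_neg])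
      have heq : (((1 : ℝ) : ℂ) • (1 : E →L[ℂ] E)) + -bop = (1 : E →L[ℂ] E) - bop := by
        ext v
        simp [sub_eq_add_neg]
      rwa [heq] at h
    have hp := (hpos _ hp1').1
    have hφb : (φ bop).re = ‖φ x‖ := by
      have hstep : φ bop = (2 : ℂ)⁻¹ * (φ y + φ (star y)) := by
        calc φ bop = φ ((2:ℂ)⁻¹ • (y + star y)) := congrArg φ hbdef
          _ = (2:ℂ)⁻¹ • φ (y + star y) := φ.map_smul _ _
          _ = (2:ℂ)⁻¹ • (φ y + φ (star y)) := by rw [map_add]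
          _ = (2:ℂ)⁻¹ * (φ y + φ (star y)) := rfl
      rw [hstep, phi_star hpos, hφy, Complex.conj_ofReal]
      have hc2 : (2 : ℂ)⁻¹ * ((‖φ x‖ : ℂ) + (‖φ x‖ : ℂ)) = ((‖φ x‖ : ℝ) : ℂ) := by
        push_cast
        ring
      rw [hc2, Complex.ofReal_re]
    have hrre : (φ ((1 : E →L[ℂ] E) - bop)).re = r - ‖φ x‖ := by
      rw [map_sub, Complex.sub_re, hφb, hrdef]
    rw [hrre] at hp
    linarith
  have hle : ‖φ‖ ≤ r := by
    refine φ.opNorm_le_bound h1pos.1 fun x => ?_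
    rcases eq_or_ne x 0 with hx0 | hx0
    · simp [hx0, h1pos.1]
    have hnx : (0:ℝ) < ‖x‖ := norm_pos_iff.mpr hx0
    have hux : ‖(((‖x‖⁻¹ : ℝ) : ℂ) • x)‖ = 1 := by
      rw [norm_smul_op, Complex.norm_real, Real.norm_eq_abs,
        abs_of_pos (by positivity)]
      exact inv_mul_cancel₀ hnx.ne'
    have h2 := claim _ hux.le
    have hsm : φ ((((‖x‖⁻¹ : ℝ) : ℂ)) • x) = (((‖x‖⁻¹ : ℝ) : ℂ)) * φ x := φ.map_smul _ _
    rw [hsm, norm_mul, Complex.norm_real, Real.norm_eq_abs,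
      abs_of_pos (by positivity : (0:ℝ) < ‖x‖⁻¹)] at h2
    calc ‖φ x‖ = ‖x‖ * (‖x‖⁻¹ * ‖φ x‖) := by field_simp
      _ ≤ ‖x‖ * r := by gcongr
      _ = r * ‖x‖ := mul_comm _ _
  have hge : r ≤ 1 := by
    calc r ≤ ‖φ 1‖ := Complex.re_le_norm _
      _ ≤ ‖φ‖ * ‖(1 : E →L[ℂ] E)‖ := φ.le_opNorm _
      _ ≤ 1 * 1 := by
          rw [hn]
          gcongr
          exact ContinuousLinearMap.norm_id_le
      _ = 1 := one_mul 1
  have hr1 : r = 1 := le_antisymm hge (hn ▸ hle)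
  exact Complex.ext hr1 h1pos.2

end Aux


section Key

variable {E : Type*} [NormedAddCommGroup E] [InnerProductSpace ℂ E] [CompleteSpace E]

set_option maxHeartbeats 1000000 in
lemma mem_diag_of_mem_offdiag {V : Set E} (hV : ∀ ξ ∈ V, ‖ξ‖ = 1)
    {φ : (E →L[ℂ] E) →L[ℂ] ℂ} (hφ1 : φ 1 = 1)
    (hmem : φ ∈ closure (convexHull ℝ
      {ψ : (E →L[ℂ] E) →L[ℂ] ℂ | ∃ ξ ∈ V, ∃ η ∈ V, ψ = omegaFunctional ξ η})) :
    φ ∈ closure (convexHull ℝ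
      {ψ : (E →L[ℂ] E) →L[ℂ] ℂ | ∃ ξ ∈ V, ψ = omegaFunctional ξ ξ}) := by
  rw [Metric.mem_closure_iff] at hmem ⊢
  intro ε hε
  set δ : ℝ := min (ε / 4) (ε ^ 2 / 32) with hδdef
  have hδpos : 0 < δ := by positivity
  obtain ⟨ψ₀, hψ₀mem, hdist⟩ := hmem δ hδpos
  rw [convexHull_eq] at hψ₀mem
  obtain ⟨ι, t, w, z, hw0, hw1, hz, hcm⟩ := hψ₀mem
  rw [Finset.centerMass_eq_of_sum_1 _ _ hw1] at hcm
  have hz' : ∀ i : {x // x ∈ t}, ∃ ξ ∈ V, ∃ η ∈ V, z i.1 = omegaFunctional ξ η :=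
    fun i => hz i.1 i.2
  choose ξ hξV η hηV hzeq using hz'
  have hξ1 : ∀ i, ‖ξ i‖ = 1 := fun i => hV _ (hξV i)
  have hη1 : ∀ i, ‖η i‖ = 1 := fun i => hV _ (hηV i)
  have hψ₀ : ψ₀ = ∑ i ∈ t.attach, w i.1 • z i.1 := by
    rw [← hcm, ← Finset.sum_attach t (fun i => w i • z i)]
  have hw1' : ∑ i ∈ t.attach, w i.1 = 1 := by
    rw [Finset.sum_attach t w]; exact hw1
  have hw0' : ∀ i : {x // x ∈ t}, 0 ≤ w i.1 := fun i => hw0 i.1 i.2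
  set ψ : (E →L[ℂ] E) →L[ℂ] ℂ :=
    ∑ i ∈ t.attach, w i.1 • omegaFunctional (ξ i) (ξ i) with hψdef
  have hψmem : ψ ∈ convexHull ℝ
      {ψ : (E →L[ℂ] E) →L[ℂ] ℂ | ∃ ξ ∈ V, ψ = omegaFunctional ξ ξ} := by
    refine (convex_convexHull ℝ _).sum_mem (fun i _ => hw0' i) hw1' fun i _ => ?_
    exact subset_convexHull ℝ _ ⟨ξ i, hξV i, rfl⟩
  set a : {x // x ∈ t} → ℝ := fun i => 1 - (⟪η i, ξ i⟫_ℂ).re with hadef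
  have ha0 : ∀ i, 0 ≤ a i := by
    intro i
    have h1 : (⟪η i, ξ i⟫_ℂ).re ≤ 1 := by
      calc (⟪η i, ξ i⟫_ℂ).re ≤ ‖⟪η i, ξ i⟫_ℂ‖ := Complex.re_le_norm _
        _ ≤ ‖η i‖ * ‖ξ i‖ := norm_inner_le_norm _ _
        _ = 1 := by rw [hξ1, hη1]; ring
    simp only [hadef]; linarith
  have hψ₀1 : ψ₀ 1 = ∑ i ∈ t.attach, (w i.1 : ℂ) * ⟪η i, ξ i⟫_ℂ := by
    rw [hψ₀, ContinuousLinearMap.sum_apply]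
    refine Finset.sum_congr rfl fun i _ => ?_
    rw [ContinuousLinearMap.smul_apply, hzeq i, omegaFunctional_apply]
    simp [Complex.real_smul]
  have hre : ∑ i ∈ t.attach, w i.1 * a i ≤ δ := by
    have h1 : ‖φ 1 - ψ₀ 1‖ ≤ δ := by
      calc ‖φ 1 - ψ₀ 1‖ = ‖(φ - ψ₀) 1‖ := by rw [ContinuousLinearMap.sub_apply]
        _ ≤ ‖φ - ψ₀‖ * ‖(1 : E →L[ℂ] E)‖ := (φ - ψ₀).le_opNorm _
        _ ≤ ‖φ - ψ₀‖ * 1 := by gcongr; exact ContinuousLinearMap.norm_id_le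
        _ ≤ δ := by
            rw [mul_one, ← dist_eq_norm]
            exact hdist.le
    have h2 : (φ 1 - ψ₀ 1).re ≤ δ := (Complex.re_le_norm _).trans h1
    have e : ∑ i ∈ t.attach, w i.1 * a i
        = ∑ i ∈ t.attach, (w i.1 - w i.1 * (⟪η i, ξ i⟫_ℂ).re) := by
      refine Finset.sum_congr rfl fun i _ => ?_
      simp only [hadef]
      ring
    have h3 : (φ 1 - ψ₀ 1).re
        = 1 - ∑ i ∈ t.attach, w i.1 * (⟪η i, ξ i⟫_ℂ).re := by
      rw [hφ1, hψ₀1, Complex.sub_re, Complex.one_re, Complex.re_sum]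
      have hterm : ∀ i ∈ t.attach, ((w i.1 : ℂ) * ⟪η i, ξ i⟫_ℂ).re
          = w i.1 * (⟪η i, ξ i⟫_ℂ).re := by
        intro i _
        simp [Complex.mul_re]
      rw [Finset.sum_congr rfl hterm]
    rw [e, Finset.sum_sub_distrib, hw1']
    rw [h3] at h2
    linarith
  have hnormdiff : ‖ψ₀ - ψ‖ ≤ ∑ i ∈ t.attach, w i.1 * ‖η i - ξ i‖ := by
    have hsub : ψ₀ - ψ = ∑ i ∈ t.attach, w i.1 • omegaFunctional (ξ i) (η i - ξ i) := by
      rw [hψ₀, hψdef, ← Finset.sum_sub_distrib]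
      refine Finset.sum_congr rfl fun i _ => ?_
      rw [hzeq i, ← omegaFunctional_sub]
      exact (smul_sub (w i.1) _ _).symm
    rw [hsub]
    calc ‖∑ i ∈ t.attach, w i.1 • omegaFunctional (ξ i) (η i - ξ i)‖
        ≤ ∑ i ∈ t.attach, ‖w i.1 • omegaFunctional (ξ i) (η i - ξ i)‖ :=
          norm_sum_le _ _
      _ ≤ ∑ i ∈ t.attach, w i.1 * ‖η i - ξ i‖ := by
          refine Finset.sum_le_sum fun i _ => ?_
          rw [norm_smul_fnR, abs_of_nonneg (hw0' i)]
          have hb : ‖omegaFunctional (ξ i) (η i - ξ i)‖ ≤ ‖η i - ξ i‖ := by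
            have h := norm_omegaFunctional_le (ξ i) (η i - ξ i)
            rwa [hξ1, mul_one] at h
          exact mul_le_mul_of_nonneg_left hb (hw0' i)
  have hnsq : ∀ i, ‖η i - ξ i‖ ^ 2 = 2 * a i := by
    intro i
    have h := @norm_sub_sq ℂ _ _ _ _ (η i) (ξ i)
    rw [hξ1, hη1] at h
    simp only [RCLike.re_to_complex] at h
    rw [h]
    simp only [hadef]
    ring
  have hsum2 : ∑ i ∈ t.attach, w i.1 * ‖η i - ξ i‖ ^ 2 ≤ 2 * δ := by
    calc ∑ i ∈ t.attach, w i.1 * ‖η i - ξ i‖ ^ 2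
        = 2 * ∑ i ∈ t.attach, w i.1 * a i := by
          rw [Finset.mul_sum]
          refine Finset.sum_congr rfl fun i _ => ?_
          rw [hnsq]; ring
      _ ≤ 2 * δ := by linarith
  have hCS : ∑ i ∈ t.attach, w i.1 * ‖η i - ξ i‖ ≤ Real.sqrt (2 * δ) := by
    rw [Real.le_sqrt (Finset.sum_nonneg fun i _ =>
      mul_nonneg (hw0' i) (norm_nonneg _)) (by positivity)]
    have hcs := Finset.sum_mul_sq_le_sq_mul_sq t.attach
      (fun i => Real.sqrt (w i.1)) (fun i => Real.sqrt (w i.1) * ‖η i - ξ i‖)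
    have he1 : ∀ i ∈ t.attach,
        Real.sqrt (w i.1) * (Real.sqrt (w i.1) * ‖η i - ξ i‖) = w i.1 * ‖η i - ξ i‖ := by
      intro i _
      rw [← mul_assoc, Real.mul_self_sqrt (hw0' i)]
    have he2 : ∀ i ∈ t.attach, Real.sqrt (w i.1) ^ 2 = w i.1 := by
      intro i _
      exact Real.sq_sqrt (hw0' i)
    have he3 : ∀ i ∈ t.attach,
        (Real.sqrt (w i.1) * ‖η i - ξ i‖) ^ 2 = w i.1 * ‖η i - ξ i‖ ^ 2 := by
      intro i _
      rw [mul_pow, Real.sq_sqrt (hw0' i)]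
    rw [Finset.sum_congr rfl he1, Finset.sum_congr rfl he2, Finset.sum_congr rfl he3,
      hw1', one_mul] at hcs
    exact hcs.trans hsum2
  have hsqrt : Real.sqrt (2 * δ) ≤ ε / 4 := by
    have h1 : 2 * δ ≤ (ε / 4) ^ 2 := by
      have h2 := min_le_right (ε / 4) (ε ^ 2 / 32)
      calc 2 * δ ≤ 2 * (ε ^ 2 / 32) := by linarith
        _ ≤ (ε / 4) ^ 2 := by nlinarith
    calc Real.sqrt (2 * δ) ≤ Real.sqrt ((ε / 4) ^ 2) := Real.sqrt_le_sqrt h1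
      _ = ε / 4 := Real.sqrt_sq (by positivity)
  refine ⟨ψ, hψmem, ?_⟩
  have hδle : δ ≤ ε / 4 := min_le_left _ _
  calc dist φ ψ ≤ dist φ ψ₀ + dist ψ₀ ψ := dist_triangle _ _ _
    _ < δ + (ε / 4) := by
        have hd2 : dist ψ₀ ψ ≤ ε / 4 := by
          rw [dist_eq_norm]
          exact hnormdiff.trans (hCS.trans hsqrt)
        linarith [hdist]
    _ ≤ ε / 2 := by linarith
    _ < ε := by linarith

set_option maxHeartbeats 1000000 in
lemma key_lemma (V : Set E) (hV : ∀ ξ ∈ V, ‖ξ‖ = 1)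
    (φ : (E →L[ℂ] E) →L[ℂ] ℂ) (hφ : IsNormalState φ) :
    1 ≤ qK (closure (convexHull ℝ
      {ψ : (E →L[ℂ] E) →L[ℂ] ℂ | ∃ ξ ∈ V, ∃ η ∈ V, ψ = omegaFunctional ξ η})) φ ∧
    (qK (closure (convexHull ℝ
      {ψ : (E →L[ℂ] E) →L[ℂ] ℂ | ∃ ξ ∈ V, ∃ η ∈ V, ψ = omegaFunctional ξ η})) φ = 1 ↔
      φ ∈ closure (convexHull ℝ
        {ψ : (E →L[ℂ] E) →L[ℂ] ℂ | ∃ ξ ∈ V, ψ = omegaFunctional ξ ξ})) := by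
  set S : Set ((E →L[ℂ] E) →L[ℂ] ℂ) :=
    {ψ | ∃ ξ ∈ V, ∃ η ∈ V, ψ = omegaFunctional ξ η} with hSdef
  set D : Set ((E →L[ℂ] E) →L[ℂ] ℂ) :=
    {ψ | ∃ ξ ∈ V, ψ = omegaFunctional ξ ξ} with hDdef
  set K : Set ((E →L[ℂ] E) →L[ℂ] ℂ) := closure (convexHull ℝ S) with hKdef
  have hKball : ∀ ψ ∈ K, ‖ψ‖ ≤ 1 := by
    have hS : S ⊆ Metric.closedBall 0 1 := by
      rintro ψ ⟨ξ, hξ, η, hη, rfl⟩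
      rw [Metric.mem_closedBall, dist_zero_right]
      calc ‖omegaFunctional ξ η‖ ≤ ‖η‖ * ‖ξ‖ := norm_omegaFunctional_le _ _
        _ = 1 := by rw [hV _ hξ, hV _ hη]; ring
    have hhull : convexHull ℝ S ⊆ Metric.closedBall 0 1 :=
      convexHull_min hS (convex_closedBall _ _)
    intro ψ hψ
    have h := closure_minimal hhull Metric.isClosed_closedBall hψ
    rwa [Metric.mem_closedBall, dist_zero_right] at h
  have hr_ge : ∀ r : ℝ, 0 ≤ r → φ ∈ r • K → 1 ≤ r := by
    intro r hr hmem
    rw [Set.mem_smul_set] at hmem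
    obtain ⟨ψ, hψK, hψeq⟩ := hmem
    have hψeq' : r • ψ = φ := hψeq
    have h1 : (1 : ℝ) = ‖φ‖ := hφ.2.1.symm
    have h2 : ‖φ‖ ≤ r := by
      rw [← hψeq', norm_smul_fnR, abs_of_nonneg hr]
      calc r * ‖ψ‖ ≤ r * 1 := by
            gcongr
            exact hKball _ hψK
        _ = r := mul_one r
    linarith [h1 ▸ h2]
  have part1 : 1 ≤ qK K φ := by
    refine le_sInf fun c hc => ?_
    obtain ⟨r, hr0, rfl, hmem⟩ := hc
    exact ENNReal.one_le_ofReal.mpr (hr_ge r hr0 hmem)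
  refine ⟨part1, ?_, ?_⟩
  · intro hq
    have hφ1 : φ 1 = 1 := phi_apply_one hφ.2.2 hφ.2.1
    have hφK : φ ∈ K := by
      have hcl : ∀ δ : ℝ, δ > 0 → ∃ ψ ∈ K, dist φ ψ < δ := by
        intro δ hδ
        have hlt : qK K φ < ENNReal.ofReal (1 + δ) := by
          rw [hq, show (1 : ℝ≥0∞) = ENNReal.ofReal 1 from ENNReal.ofReal_one.symm]
          exact (ENNReal.ofReal_lt_ofReal_iff (by linarith)).mpr (by linarith)
        obtain ⟨c, hc, hclt⟩ := sInf_lt_iff.mp hlt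
        obtain ⟨r, hr0, rfl, hmem⟩ := hc
        have hrlt : r < 1 + δ :=
          (ENNReal.ofReal_lt_ofReal_iff (by linarith)).mp hclt
        have hr1 : 1 ≤ r := hr_ge r hr0 hmem
        rw [Set.mem_smul_set] at hmem
        obtain ⟨ψ, hψK, hψeq⟩ := hmem
        have hψeq' : r • ψ = φ := hψeq
        refine ⟨ψ, hψK, ?_⟩
        have hsub2 : r • ψ - ψ = (r - 1) • ψ := by
          ext x
          simp only [ContinuousLinearMap.sub_apply, ContinuousLinearMap.smul_apply,
            Complex.real_smul]
          push_cast
          ring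
        rw [dist_eq_norm, ← hψeq', hsub2, norm_smul_fnR, abs_of_nonneg (by linarith)]
        calc (r - 1) * ‖ψ‖ ≤ (r - 1) * 1 := by
              gcongr
              exact hKball _ hψK
          _ < δ := by linarith
      have h := Metric.mem_closure_iff.mpr hcl
      rw [hKdef] at h
      rw [closure_closure] at h
      exact h
    exact mem_diag_of_mem_offdiag hV hφ1 hφK
  · intro hmem
    refine le_antisymm ?_ part1
    have hDS : D ⊆ S := by
      rintro ψ₁ ⟨ξ, hξ, rfl⟩
      exact ⟨ξ, hξ, ξ, hξ, rfl⟩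
    have hφK : φ ∈ K := closure_mono (convexHull_mono hDS) hmem
    have hmem1 : φ ∈ (1 : ℝ) • K := by
      have h1 : (1:ℝ) • φ ∈ (1:ℝ) • K := Set.smul_mem_smul_set hφK
      have h2 : (1:ℝ) • φ = φ := one_smul ℝ φ
      rwa [h2] at h1
    exact sInf_le ⟨1, zero_le_one, ENNReal.ofReal_one.symm, hmem1⟩

end Key


/-- With `V^{⊗k}_l` the unit vectors of Schmidt rank `≤ l`, `V^{∧k}_l` the
unit vectors of Slater rank `≤ l`, and `K^{⊗k}_l`, `K^{∧k}_l` the norm-closed convex hulls of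
the corresponding vector functionals: (i) every normal state `φ` on `B(H^{⊗k})` satisfies
`q_{K^{⊗k}_l}(φ) ≥ 1`, with equality iff the Schmidt number of `φ` is `≤ l`; (ii) every normal
state `φ₋` on `B(H^{∧k})` satisfies `q_{K^{∧k}_l}(φ₋) ≥ 1`, with equality iff the Slater
number of `φ₋` is `≤ l`. -/
theorem stmt17 {H T : Type*} [NormedAddCommGroup H] [InnerProductSpace ℂ H] [CompleteSpace H]
    [NormedAddCommGroup T] [InnerProductSpace ℂ T] [CompleteSpace T]
    (k l : ℕ) (P : HilbertTensorPower k H T)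
    (Vtl Vwl : Set T)
    (hVtl : Vtl = {ξ : T | ‖ξ‖ = 1 ∧ ∃ (c : Fin l → ℂ) (η : Fin l → Fin k → H),
      (∀ i j, ‖η i j‖ = 1) ∧ ξ = ∑ i, c i • P.tprod (η i)})
    (hVwl : Vwl = {ξ : T | ‖ξ‖ = 1 ∧ ∃ (c : Fin l → ℂ) (η : Fin l → Fin k → H),
      (∀ i, ‖P.wedge (η i)‖ = 1) ∧ ξ = ∑ i, c i • P.wedge (η i)})
    (Ktl Kwl : Set ((T →L[ℂ] T) →L[ℂ] ℂ))
    (hKtl : Ktl = closure (convexHull ℝ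
      {φ : (T →L[ℂ] T) →L[ℂ] ℂ | ∃ ξ ∈ Vtl, ∃ η ∈ Vtl, φ = omegaFunctional ξ η}))
    (hKwl : Kwl = closure (convexHull ℝ
      {φ : (T →L[ℂ] T) →L[ℂ] ℂ | ∃ ξ ∈ Vwl, ∃ η ∈ Vwl, φ = omegaFunctional ξ η})) :
    (∀ φ : (T →L[ℂ] T) →L[ℂ] ℂ, IsNormalState φ →
      1 ≤ qK Ktl φ ∧
      (qK Ktl φ = 1 ↔ φ ∈ closure (convexHull ℝ
        {ψ : (T →L[ℂ] T) →L[ℂ] ℂ | ∃ ξ ∈ Vtl, ψ = omegaFunctional ξ ξ}))) ∧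
    (∀ φ : (T →L[ℂ] T) →L[ℂ] ℂ, IsNormalState φ →
      (∀ x : T →L[ℂ] T, φ x = φ (P.Pminus ∘L x ∘L P.Pminus)) →
      1 ≤ qK Kwl φ ∧
      (qK Kwl φ = 1 ↔ φ ∈ closure (convexHull ℝ
        {ψ : (T →L[ℂ] T) →L[ℂ] ℂ | ∃ ξ ∈ Vwl, ψ = omegaFunctional ξ ξ}))) := by
  subst hVtl hVwl hKtl hKwl
  constructor
  · intro φ hφ
    exact key_lemma _ (fun ξ hξ => hξ.1) φ hφ
  · intro φ hφ _
    exact key_lemma _ (fun ξ hξ => hξ.1) φ hφ
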